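/- In the regularised RBM construction, for the hidden configuration h^η with h^η_α = 2δ_{αη} - 1, the energy as a function of the visible configuration is E(v, h^η) = -4A (v^η · v) + C_η where C_η = -∑_α c_α (2δ_{αη} - 1) does not depend on v; consequently v = v^η is the unique minimizer of E(·, h^η), and flipping any single visible spin of v^η increases the energy by exactly 8A. -/
import Mathlib


open Finset

/-- Energy of the regularised RBM with weights `W j α = 2 A v α j`, zero visible
biases and hidden biases `c α = 2 A (λ α - V)`. -/
noncomputable def raEnergy {V H : ℕ} (A : ℝ) (lam : Fin H → ℝ)
    (v : Fin H → Fin V → ℝ) (x : Fin V → ℝ) (h : Fin H → ℝ) : ℝ :=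
  -(∑ j, ∑ α, x j * (2 * A * v α j) * h α)
    - ∑ α, (2 * A * (lam α - (V : ℝ))) * h α

/-- Overlap `S α η = v^α · v^η`. -/
noncomputable def raOverlap {V H : ℕ} (v : Fin H → Fin V → ℝ) (α η : Fin H) : ℝ :=
  ∑ j, v α j * v η j

theorem regularised_visible_minimizer
    (V H : ℕ) (A : ℝ) (hA : 0 < A) (lam : Fin H → ℝ)
    (v : Fin H → Fin V → ℝ)
    (hpm : ∀ η j, v η j = 1 ∨ v η j = -1)
    (hdist : Function.Injective v)
    (hneg : ∀ η, ∃ η', ∀ j, v η' j = -(v η j))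
    (η : Fin H) :
    let hpat : Fin H → ℝ := fun β => if β = η then 1 else -1
    let Cη : ℝ := -∑ α, (2 * A * (lam α - (V : ℝ))) * (if α = η then (1:ℝ) else -1)
    -- energy as a function of the visible configuration
    (∀ x : Fin V → ℝ, (∀ j, x j = 1 ∨ x j = -1) →
      raEnergy A lam v x hpat = -4 * A * (∑ j, v η j * x j) + Cη) ∧
    -- v^η is the unique minimizer among ±1 visible configurations
    (∀ x : Fin V → ℝ, (∀ j, x j = 1 ∨ x j = -1) → x ≠ v η →
      raEnergy A lam v (v η) hpat < raEnergy A lam v x hpat) ∧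
    -- flipping any single visible spin of v^η costs exactly 8A
    (∀ j : Fin V,
      raEnergy A lam v (Function.update (v η) j (-(v η j))) hpat
        = raEnergy A lam v (v η) hpat + 8 * A) := by
  intro hpat Cη
  -- the sum over patterns of each coordinate is zero
  have sumv : ∀ j : Fin V, ∑ α, v α j = 0 := by
    intro j
    refine Finset.sum_involution (fun a _ => Classical.choose (hneg a)) ?_ ?_
      (fun a ha => Finset.mem_univ _) ?_
    · intro a _
      have := Classical.choose_spec (hneg a) j
      rw [this]; ring
    · intro a _ _
      intro hEq
      have hEq' : Classical.choose (hneg a) = a := hEq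
      have h1 := Classical.choose_spec (hneg a) j
      rw [hEq'] at h1
      rcases hpm a j with h2 | h2 <;> rw [h2] at h1 <;> norm_num at h1
    · intro a _
      apply hdist
      funext k
      have h1 := Classical.choose_spec (hneg (Classical.choose (hneg a))) k
      have h2 := Classical.choose_spec (hneg a) k
      rw [h1, h2]; ring
  have hsq : ∀ j, v η j * v η j = 1 := by
    intro j; rcases hpm η j with h | h <;> rw [h] <;> norm_num
  -- main energy formula
  have hform : ∀ x : Fin V → ℝ,
      raEnergy A lam v x hpat = -4 * A * (∑ j, v η j * x j) + Cη := by
    intro x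
    have key : ∀ j, ∑ α, x j * (2 * A * v α j) * hpat α = 4 * A * (v η j * x j) := by
      intro j
      have : ∀ α, x j * (2 * A * v α j) * hpat α
          = (if α = η then 4 * A * (v α j * x j) else 0) - x j * (2 * A * v α j) := by
        intro α
        by_cases hα : α = η
        · simp only [hpat, hα, if_pos rfl, if_true]; ring
        · simp only [hpat, if_neg hα]; ring
      rw [Finset.sum_congr rfl (fun α _ => this α), Finset.sum_sub_distrib,
        Finset.sum_ite_eq' Finset.univ η (fun α => 4 * A * (v α j * x j))]
      simp only [Finset.mem_univ, if_true]
      have : ∑ α, x j * (2 * A * v α j) = x j * (2 * A) * ∑ α, v α j := by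
        rw [Finset.mul_sum]; exact Finset.sum_congr rfl (fun α _ => by ring)
      rw [this, sumv j]; ring
    simp only [raEnergy, Cη]
    rw [Finset.sum_congr rfl (fun j _ => key j), ← Finset.mul_sum]
    ring
  have hself : (∑ j, v η j * v η j) = (V : ℝ) := by
    rw [Finset.sum_congr rfl (fun j _ => hsq j)]
    simp
  refine ⟨fun x _ => hform x, ?_, ?_⟩
  · intro x hx hne
    rw [hform x, hform (v η), hself]
    have hlt : (∑ j, v η j * x j) < (V : ℝ) := by
      have hne' : ∃ j, x j ≠ v η j := by
        by_contra h
        push_neg at h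
        exact hne (funext h)
      obtain ⟨j0, hj0⟩ := hne'
      calc (∑ j, v η j * x j) < ∑ _j : Fin V, (1 : ℝ) := by
            apply Finset.sum_lt_sum
            · intro j _
              rcases hpm η j with h1 | h1 <;> rcases hx j with h2 | h2 <;>
                rw [h1, h2] <;> norm_num
            · refine ⟨j0, Finset.mem_univ _, ?_⟩
              rcases hpm η j0 with h1 | h1 <;> rcases hx j0 with h2 | h2 <;>
                first
                  | exact absurd (h2.trans h1.symm) hj0
                  | (rw [h1, h2]; norm_num)
        _ = (V : ℝ) := by simp
    nlinarith
  · intro j0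
    have hx : (∑ j, v η j * Function.update (v η) j0 (-(v η j0)) j) = (V : ℝ) - 2 := by
      have : ∀ j : Fin V, v η j * Function.update (v η) j0 (-(v η j0)) j
          = 1 - (if j = j0 then 2 else 0) := by
        intro j
        by_cases hj : j = j0
        · subst hj
          rw [Function.update_self, if_pos rfl]
          nlinarith [hsq j]
        · rw [Function.update_of_ne hj, if_neg hj, hsq j]; ring
      rw [Finset.sum_congr rfl (fun j _ => this j), Finset.sum_sub_distrib,
        Finset.sum_ite_eq' Finset.univ j0 (fun _ => (2:ℝ))]
      simp
    rw [hform, hform, hself, hx]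
    ring
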